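/- Let Q=(V,E,s,t) be a finite quiver without cycles of length m, with starting set S and associated quiver Q'. Let a ∈ S and x ∈ Path(Q') with t(a) = s(x). Then there exists an automorphism f ∈ Aut(Q') such that f(x) = ax (where ax denotes the concatenated path, which lies in Path(Q')). -/

import Mathlib

open scoped Classical

noncomputable section

variable {V E : Type*}

/-- A (positive-length) path in the quiver `(V, E, s, t)`: a nonempty list of arrows
in which consecutive arrows are composable, i.e. `t αᵢ = s αᵢ₊₁`. -/
def IsPath (s t : E → V) (l : List E) : Prop :=
  l ≠ [] ∧ l.Chain' (fun a b => t a = s b)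

/-- The source of a (nonempty) list of arrows, as an `Option`. -/
def src? (s : E → V) (l : List E) : Option V := l.head?.map s

/-- The target of a (nonempty) list of arrows, as an `Option`. -/
def tgt? (t : E → V) (l : List E) : Option V := l.getLast?.map t

/-- The quiver has no cycles: there is no path whose source equals its target. -/
def NoCycles (s t : E → V) : Prop :=
  ∀ l : List E, IsPath s t l → src? s l ≠ tgt? t l

/-- `m` is the maximum of the lengths of paths of the quiver (the length of the quiver). -/
def IsMaxPathLen (s t : E → V) (m : ℕ) : Prop :=
  (∃ l : List E, IsPath s t l ∧ l.length = m) ∧ ∀ l : List E, IsPath s t l → l.length ≤ m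

/-- The set `Path(Q)` of all paths of length `≥ 1`, as a subtype of lists of arrows. -/
abbrev PathQ (s t : E → V) := {l : List E // IsPath s t l}

/-- The underlying vector space of the Lie algebra `n_Q` obtained from the quiver:
the real vector space with basis `Path(Q)`. -/
abbrev nQ (s t : E → V) := PathQ s t →₀ ℝ

/-- The Lie bracket of two basis paths: `[x, y] = xy` if the concatenation `xy` is a path,
`[x, y] = -yx` if the concatenation `yx` is a path, and `[x, y] = 0` otherwise. -/
def braBasis (s t : E → V) (x y : PathQ s t) : nQ s t :=
  if h : IsPath s t (x.val ++ y.val) then Finsupp.single ⟨x.val ++ y.val, h⟩ 1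
  else if h' : IsPath s t (y.val ++ x.val) then -Finsupp.single ⟨y.val ++ x.val, h'⟩ 1
  else 0

/-- The Lie bracket of `n_Q`, extended bilinearly from basis paths. -/
def bra (s t : E → V) (u v : nQ s t) : nQ s t :=
  u.sum fun x cx => v.sum fun y cy => (cx * cy) • braBasis s t x y

/-- The span of all brackets of elements of two subspaces of `n_Q`. -/
def braSpan (s t : E → V) (M N : Submodule ℝ (nQ s t)) : Submodule ℝ (nQ s t) :=
  Submodule.span ℝ {z | ∃ u ∈ M, ∃ v ∈ N, z = bra s t u v}

/-- The starting set `S` of a quiver of length `m`: the set of arrows `a` such that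
`a x` is a path of length `m` for some path `x`. -/
def startSet (s t : E → V) (m : ℕ) : Set E :=
  {a | ∃ x : List E, IsPath s t x ∧ IsPath s t (a :: x) ∧ (a :: x).length = m}

/-- The arrow set `E' = (E ∖ S) ∪ {ab ∈ Path(Q) : a ∈ S, b ∈ E}` of the quiver `Q'`,
realized as a set of lists of arrows of `Q`. -/
def edgesQ' (s t : E → V) (m : ℕ) : Set (List E) :=
  {l | (∃ a : E, a ∉ startSet s t m ∧ l = [a]) ∨
       (∃ a b : E, a ∈ startSet s t m ∧ IsPath s t [a, b] ∧ l = [a, b])}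

/-- `L` is a decomposition of the list `l` of arrows as a path of the quiver `Q'`:
a nonempty chain of consecutively composable `Q'`-arrows whose concatenation is `l`. -/
def IsDecompQ' (s t : E → V) (m : ℕ) (L : List (List E)) (l : List E) : Prop :=
  L ≠ [] ∧ (∀ p ∈ L, p ∈ edgesQ' s t m) ∧
    L.Chain' (fun p q => tgt? t p = src? s q) ∧ L.flatten = l

/-- `l` underlies a path of the quiver `Q'`. -/
def IsPathQ' (s t : E → V) (m : ℕ) (l : List E) : Prop :=
  ∃ L : List (List E), IsDecompQ' s t m L l

/-- `f : E → E` is an automorphism of the quiver `(V, E, s, t)`. -/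
def IsQuivAut (s t : E → V) (f : E → E) : Prop :=
  Function.Bijective f ∧ ∀ x y : E, (t x = s y ↔ t (f x) = s (f y))

/-- `g` is an automorphism of the quiver whose arrow set is the set `ES` of lists of
arrows of `Q` (such as the quiver `Q'` with arrow set `edgesQ'`). -/
def IsQuivAutOn (s t : E → V) (ES : Set (List E)) (g : List E → List E) : Prop :=
  Set.BijOn g ES ES ∧
    ∀ p ∈ ES, ∀ q ∈ ES, (tgt? t p = src? s q ↔ tgt? t (g p) = src? s (g q))

/-- The subspace `n' = span Path(Q')` of `n_Q`. -/
def nQ'span (s t : E → V) (m : ℕ) : Submodule ℝ (nQ s t) :=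
  Submodule.span ℝ {u | ∃ p : PathQ s t, IsPathQ' s t m p.val ∧ u = Finsupp.single p 1}

/-- A single arrow, regarded as a path of length one. -/
def edgePath (s t : E → V) (a : E) : PathQ s t := ⟨[a], by first | simp [IsPath, List.Chain'] | exact ⟨List.cons_ne_nil _ _, List.isChain_singleton _⟩⟩


/-- The swap automorphism: exchanges the `Q'`-arrows `[b]` and `[a, b]`. -/
def gswap (a b : E) : List E → List E := fun l =>
  if l = [b] then [a, b] else if l = [a, b] then [b] else l

lemma gswap_b (a b : E) : gswap a b [b] = [a, b] := by simp [gswap]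

lemma gswap_ab (a b : E) : gswap a b [a, b] = [b] := by simp [gswap]

lemma gswap_other (a b : E) {l : List E} (h1 : l ≠ [b]) (h2 : l ≠ [a, b]) :
    gswap a b l = l := by simp [gswap, h1, h2]

lemma gswap_invol (a b : E) (l : List E) : gswap a b (gswap a b l) = l := by
  by_cases h1 : l = [b]
  · subst h1; rw [gswap_b, gswap_ab]
  · by_cases h2 : l = [a, b]
    · subst h2; rw [gswap_ab, gswap_b]
    · rw [gswap_other a b h1 h2, gswap_other a b h1 h2]

lemma tgt?_gswap (t : E → V) (a b : E) (l : List E) :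
    tgt? t (gswap a b l) = tgt? t l := by
  by_cases h1 : l = [b]
  · subst h1; rw [gswap_b]; simp [tgt?]
  · by_cases h2 : l = [a, b]
    · subst h2; rw [gswap_ab]; simp [tgt?]
    · rw [gswap_other a b h1 h2]

lemma edge_ne_nil {s t : E → V} {m : ℕ} {p : List E} (hp : p ∈ edgesQ' s t m) :
    p ≠ [] := by
  rcases hp with ⟨c, _, rfl⟩ | ⟨c, d, _, _, rfl⟩ <;> simp

lemma isPath_edge {s t : E → V} {m : ℕ} {p : List E} (hp : p ∈ edgesQ' s t m) :
    IsPath s t p := by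
  rcases hp with ⟨c, _, rfl⟩ | ⟨c, d, _, h, rfl⟩
  · exact ⟨by simp, List.isChain_singleton _⟩
  · exact h

lemma isPath_append {s t : E → V} {l₁ l₂ : List E} (h₁ : IsPath s t l₁)
    (h₂ : IsPath s t l₂) (h : tgt? t l₁ = src? s l₂) : IsPath s t (l₁ ++ l₂) := by
  refine ⟨by simp [h₁.1], ?_⟩
  simp only [List.Chain', List.isChain_append]
  refine ⟨h₁.2, h₂.2, fun p hp q hq => ?_⟩
  rw [Option.mem_def] at hp hq
  rw [tgt?, src?, hp, hq] at h
  simpa using h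

lemma src?_cons_flatten {s : E → V} {p : List E} (L : List (List E)) (hp : p ≠ []) :
    src? s ((p :: L).flatten) = src? s p := by
  cases p with
  | nil => exact absurd rfl hp
  | cons c l => simp [src?]

lemma isPath_flatten {s t : E → V} {m : ℕ} :
    ∀ L : List (List E), L ≠ [] → (∀ p ∈ L, p ∈ edgesQ' s t m) →
      L.Chain' (fun p q => tgt? t p = src? s q) → IsPath s t L.flatten := by
  intro L
  induction L with
  | nil => intro h; exact absurd rfl h
  | cons p L ih =>
    intro _ hmem hch
    cases L with
    | nil =>
      simp only [List.flatten_cons, List.flatten_nil, List.append_nil]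
      exact isPath_edge (hmem p (by simp))
    | cons q L' =>
      simp only [List.Chain', List.isChain_cons_cons] at hch
      have h2 := ih (by simp) (fun r hr => hmem r (List.mem_cons_of_mem _ hr)) hch.2
      rw [show (p :: q :: L').flatten = p ++ (q :: L').flatten from rfl]
      refine isPath_append (isPath_edge (hmem p (by simp))) h2 ?_
      rw [src?_cons_flatten _ (edge_ne_nil (hmem q (by simp)))]
      exact hch.1


/-- Let `Q` be a finite quiver without cycles of length `m`, `a ∈ S`
and `x ∈ Path(Q')` with `t(a) = s(x)`. Then `ax ∈ Path(Q')` and there is an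
automorphism `g` of `Q'` sending the path `x` to the path `ax` (the action of `g` on a
path of `Q'` maps any decomposition of it into `Q'`-arrows piecewise). -/
theorem exists_autQ'_sending_x_to_ax [Finite V] [Finite E] (s t : E → V)
    (hQ : NoCycles s t) (m : ℕ) (hm : IsMaxPathLen s t m)
    (a : E) (ha : a ∈ startSet s t m)
    (x : List E) (hx : IsPathQ' s t m x) (hax : src? s x = some (t a)) :
    IsPathQ' s t m (a :: x) ∧
    ∃ g : List E → List E, IsQuivAutOn s t (edgesQ' s t m) g ∧
      ∀ L : List (List E), IsDecompQ' s t m L x → (L.map g).flatten = a :: x := by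
  classical
  obtain ⟨x₀, hx₀, hax₀, hlen₀⟩ := ha
  have haS : a ∈ startSet s t m := ⟨x₀, hx₀, hax₀, hlen₀⟩
  cases x with
  | nil => simp [src?] at hax
  | cons b x' =>
  have hb : s b = t a := by simpa [src?] using hax
  -- no arrow can precede an element of the starting set
  have extend : ∀ e ∈ startSet s t m, ∀ c : E, t c = s e → False := by
    rintro e ⟨z, hz, hez, hlenz⟩ c hc
    have hp : IsPath s t (c :: e :: z) := ⟨by simp, List.isChain_cons_cons.mpr ⟨hc, hez.2⟩⟩
    have h1 := hm.2 _ hp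
    simp only [List.length_cons] at h1 hlenz
    omega
  -- every arrow with the same target as `a` is in the starting set
  have D2 : ∀ e : E, t e = t a → e ∈ startSet s t m := by
    intro e he
    refine ⟨x₀, hx₀, ⟨by simp, ?_⟩, by simpa using hlen₀⟩
    have hch := List.isChain_cons.mp hax₀.2
    exact List.isChain_cons.mpr ⟨fun y hy => he.trans (hch.1 y hy), hch.2⟩
  -- no `Q'`-edge ends at `s a` or at `t a`
  have notEnd : ∀ p ∈ edgesQ' s t m, ∀ v, tgt? t p = some v → v ≠ s a ∧ v ≠ t a := by
    rintro p hp v hv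
    rcases hp with ⟨c, hc, rfl⟩ | ⟨c, d, hcS, hcd, rfl⟩
    · have hvc : v = t c := by
        simp [tgt?] at hv; exact hv.symm
      constructor
      · intro h; exact extend a haS c (hvc ▸ h)
      · intro h; exact hc (D2 c (hvc ▸ h))
    · have hvd : v = t d := by
        simp [tgt?] at hv; exact hv.symm
      have hcd' : t c = s d := by
        have := hcd.2
        simpa [List.Chain'] using this
      constructor
      · intro h; exact extend a haS d (hvd ▸ h)
      · intro h
        exact extend d (D2 d (hvd ▸ h)) c hcd'
  have hbnotS : b ∉ startSet s t m := fun h => extend b h a hb.symm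
  have hbE : [b] ∈ edgesQ' s t m := Or.inl ⟨b, hbnotS, rfl⟩
  have habE : [a, b] ∈ edgesQ' s t m :=
    Or.inr ⟨a, b, haS, ⟨by simp, by simpa [List.Chain'] using hb.symm⟩, rfl⟩
  -- the first edge of any decomposition of `x` is `[b]`
  have hfst : ∀ L, IsDecompQ' s t m L (b :: x') → ∃ L',
      L = [b] :: L' ∧ L'.flatten = x' := by
    rintro L ⟨hLne, hLmem, hch, hfl⟩
    cases L with
    | nil => exact absurd rfl hLne
    | cons e L' =>
      rcases hLmem e (by simp) with ⟨c, hc, rfl⟩ | ⟨c, d, hcS, hcd, rfl⟩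
      · simp only [List.flatten_cons, List.cons_append, List.nil_append,
          List.cons.injEq] at hfl
        obtain ⟨rfl, hfl2⟩ := hfl
        exact ⟨L', rfl, hfl2⟩
      · simp only [List.flatten_cons, List.cons_append, List.nil_append,
          List.cons.injEq] at hfl
        obtain ⟨rfl, -⟩ := hfl
        exact absurd hcS hbnotS
  -- every later edge of a decomposition is fixed by the swap
  have tfix : ∀ (L' : List (List E)) (p : List E), p ∈ edgesQ' s t m →
      (∀ q ∈ L', q ∈ edgesQ' s t m) →
      (p :: L').Chain' (fun p q => tgt? t p = src? s q) →
      L'.map (gswap a b) = L' := by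
    intro L'
    induction L' with
    | nil => intros; rfl
    | cons q L'' ih =>
      intro p hp hmem hch
      simp only [List.Chain', List.isChain_cons_cons] at hch
      have hq1 : q ≠ [b] := by
        rintro rfl
        have hsrc : src? s [b] = some (t a) := by simp [src?, hb]
        rw [hsrc] at hch
        exact (notEnd p hp _ hch.1).2 rfl
      have hq2 : q ≠ [a, b] := by
        rintro rfl
        have hsrc : src? s [a, b] = some (s a) := by simp [src?]
        rw [hsrc] at hch
        exact (notEnd p hp _ hch.1).1 rfl
      rw [List.map_cons, gswap_other a b hq1 hq2,
        ih q (hmem q (by simp)) (fun r hr => hmem r (by simp [hr])) hch.2]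
  have maps : ∀ p ∈ edgesQ' s t m, gswap a b p ∈ edgesQ' s t m := by
    intro p hp
    by_cases h1 : p = [b]
    · subst h1; rw [gswap_b]; exact habE
    · by_cases h2 : p = [a, b]
      · subst h2; rw [gswap_ab]; exact hbE
      · rw [gswap_other a b h1 h2]; exact hp
  constructor
  · -- `a :: x` is a path of `Q'`
    obtain ⟨L, hL⟩ := hx
    obtain ⟨L', rfl, hfl'⟩ := hfst L hL
    obtain ⟨-, hmem, hch, -⟩ := hL
    refine ⟨[a, b] :: L', by simp, ?_, ?_, ?_⟩
    · rintro p hp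
      rcases List.mem_cons.mp hp with rfl | hp
      · exact habE
      · exact hmem p (by simp [hp])
    · have hch' := List.isChain_cons.mp hch
      refine List.isChain_cons.mpr ⟨fun y hy => ?_, hch'.2⟩
      have := hch'.1 y hy
      rw [show tgt? t [a, b] = tgt? t [b] from by simp [tgt?]]
      exact this
    · simp [hfl']
  · refine ⟨gswap a b, ⟨⟨fun p hp => maps p hp, fun p _ q _ h => ?_,
      fun q hq => ⟨gswap a b q, maps q hq, gswap_invol a b q⟩⟩, ?_⟩, ?_⟩
    · rw [← gswap_invol a b p, h, gswap_invol a b q]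
    · -- composability is preserved
      intro p hp q hq
      rw [tgt?_gswap]
      by_cases h1 : q = [b]
      · subst h1
        rw [gswap_b]
        rw [show src? s [b] = some (t a) from by simp [src?, hb],
          show src? s [a, b] = some (s a) from by simp [src?]]
        constructor
        · intro h; exact absurd rfl (notEnd p hp _ h).2
        · intro h; exact absurd rfl (notEnd p hp _ h).1
      · by_cases h2 : q = [a, b]
        · subst h2
          rw [gswap_ab]
          rw [show src? s [b] = some (t a) from by simp [src?, hb],
            show src? s [a, b] = some (s a) from by simp [src?]]
          constructor
          · intro h; exact absurd rfl (notEnd p hp _ h).1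
          · intro h; exact absurd rfl (notEnd p hp _ h).2
        · rw [gswap_other a b h1 h2]
    · -- the action on decompositions
      intro L hL
      obtain ⟨L', rfl, hfl'⟩ := hfst L hL
      obtain ⟨-, hmem, hch, -⟩ := hL
      rw [List.map_cons, gswap_b,
        tfix L' [b] hbE (fun r hr => hmem r (by simp [hr])) hch]
      simp [hfl']

end
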